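/- Let p, q ∈ (0,1) satisfy p²q = (1−p)³, and let θ = 2p(1−q)/(1+p+q). Then for every x ∈ A_θ, liminf_{n→∞} (−log₂ ℙ_μ[x_1^n])/n ≤ f(θ) := −log₂(1−p) − (θ/2)·log₂[((1−q)(1−p))/(q·p)]. -/

import Mathlib

open Filter MeasureTheory Real Set

noncomputable section

/-- `Σ₂ = {0,1}^ℕ`: the space of 0-1 sequences `(x_k)_{k ≥ 1}`, where the entry `x_k`
(for `k ≥ 1`) is represented by `x (k-1) : Bool`. -/
abbrev Sigma2 : Type := ℕ → Bool

/-- The metric `ρ((x_k),(y_k)) = 2^{-min{n : x_n ≠ y_n}}` (up to the indexing convention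
`dist x y = (1/2)^{first index where x,y differ}`). -/
noncomputable instance : MetricSpace Sigma2 :=
  PiNat.metricSpaceOfDiscreteUniformity fun _ => rfl

/-- The digit `x_k ∈ {0,1}` (for `k ≥ 1`) of a sequence, as a real number. -/
def xval (x : Sigma2) (k : ℕ) : ℝ := if x (k - 1) then 1 else 0

/-- `A_θ = {(x_k) ∈ Σ₂ : lim_{n→∞} (1/n) ∑_{k=1}^n x_k x_{2k} = θ}`. -/
def Aset (θ : ℝ) : Set Sigma2 :=
  {x | Tendsto (fun n : ℕ => (∑ k ∈ Finset.Icc 1 n, xval x k * xval x (2 * k)) / (n : ℝ))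
    atTop (nhds θ)}

/-- The cylinder set `[u]` of sequences starting with the finite word `u`
(a list `u` represents the word `u_1 … u_n` with `u_k = u.getD (k-1) false`). -/
def cylinder (u : List Bool) : Set Sigma2 :=
  {x | ∀ i < u.length, x i = u.getD i false}

/-- Initial distribution: `π(0) = 1 - p`, `π(1) = p`. -/
def initProb (p : ℝ) (b : Bool) : ℝ := if b then p else 1 - p

/-- Transition probabilities: `P(0,0) = 1-p`, `P(0,1) = p`, `P(1,0) = q`, `P(1,1) = 1-q`. -/
def transProb (p q : ℝ) (a b : Bool) : ℝ :=
  if a then (if b then 1 - q else q) else (if b then p else 1 - p)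

/-- Markov weight `μ[w] = π(w_1) ∏_{j=1}^{m-1} P(w_j, w_{j+1})` of a finite word `w`. -/
def mweight (p q : ℝ) (w : List Bool) : ℝ :=
  if w = [] then 1
  else initProb p (w.getD 0 false) *
    ∏ j ∈ Finset.range (w.length - 1), transProb p q (w.getD j false) (w.getD (j + 1) false)

/-- The subword `u|_{J(i)} = (u_i, u_{2i}, u_{4i}, …)` of a finite word `u` along the
geometric progression `J(i) = {2^r i : r ≥ 0}`, keeping the indices `2^r i ≤ |u|`. -/
def subword (u : List Bool) (i : ℕ) : List Bool :=
  ((List.range (u.length + 1)).filter (fun r => 2 ^ r * i ≤ u.length)).map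
    (fun r => u.getD (2 ^ r * i - 1) false)

/-- `ℙ_μ[u] = ∏_{i ≤ n, i odd} μ[u|_{J(i)}]` for a finite word `u` of length `n`. -/
def PmuWord (p q : ℝ) (u : List Bool) : ℝ :=
  ∏ i ∈ (Finset.Icc 1 u.length).filter (fun i => Odd i), mweight p q (subword u i)

/-- `Pm` is the (probability) measure `ℙ_μ` on `Σ₂` determined by its values
`ℙ_μ[u] = ∏_{i odd} μ[u|_{J(i)}]` on cylinder sets. -/
def IsPmu (p q : ℝ) (Pm : Measure Sigma2) : Prop :=
  IsProbabilityMeasure Pm ∧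
    ∀ u : List Bool, Pm (cylinder u) = ENNReal.ofReal (PmuWord p q u)

/-- The initial word `x_1^n = x_1 … x_n` of a sequence. -/
def word (x : Sigma2) (n : ℕ) : List Bool := (List.range n).map x

/-- `N_1(x_m^n) = #{k ∈ [m,n] : x_k = 1}`. -/
def N1 (x : Sigma2) (m n : ℕ) : ℕ :=
  ((Finset.Icc m n).filter (fun k => x (k - 1) = true)).card

/-- `N_{ij}(x_1^m) = #{k ≤ m : x_k = i, x_{2k} = j}` (digits `i, j` as booleans). -/
def Nij (x : Sigma2) (i j : Bool) (m : ℕ) : ℕ :=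
  ((Finset.Icc 1 m).filter (fun k => x (k - 1) = i ∧ x (2 * k - 1) = j)).card

/-- `N_{1,odd}(x_1^n) = #{k ≤ n : k odd, x_k = 1}`. -/
def N1odd (x : Sigma2) (n : ℕ) : ℕ :=
  ((Finset.Icc 1 n).filter (fun k => Odd k ∧ x (k - 1) = true)).card

/-- The binary entropy function `H(t) = -t log₂ t - (1-t) log₂ (1-t)`. -/
def Hent (t : ℝ) : ℝ := -(t * Real.logb 2 t) - (1 - t) * Real.logb 2 (1 - t)


lemma filter_range_eq_range {m t : ℕ} (P : ℕ → Prop) [DecidablePred P]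
    (ht : t ≤ m) (hP : ∀ r, P r ↔ r < t) :
    (List.range m).filter (fun r => decide (P r)) = List.range t := by
  obtain ⟨s, rfl⟩ := Nat.exists_eq_add_of_le ht
  rw [List.range_add, List.filter_append]
  rw [List.filter_eq_self.2 (by
    intro a ha; simp only [List.mem_range] at ha
    simpa using (hP a).2 ha)]
  rw [List.filter_eq_nil_iff.2 (by
    intro a ha; simp only [List.mem_map, List.mem_range] at ha
    obtain ⟨j, hj, rfl⟩ := ha
    simpa using fun h => absurd ((hP _).1 h) (by omega))]
  simp



lemma getD_map_range {g : ℕ → Bool} {t j : ℕ} (h : j < t) :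
    (((List.range t).map g).getD j false) = g j := by
  rw [List.getD_eq_getElem?_getD, List.getElem?_map, List.getElem?_range h]
  rfl

lemma mweight_map_range (p q : ℝ) (g : ℕ → Bool) (t : ℕ) (ht : 0 < t) :
    mweight p q ((List.range t).map g) =
      initProb p (g 0) * ∏ j ∈ Finset.range (t - 1), transProb p q (g j) (g (j + 1)) := by
  have hne : (List.range t).map g ≠ [] := by
    simp [List.map_eq_nil_iff, List.range_eq_nil]; omega
  rw [mweight, if_neg hne, getD_map_range ht, List.length_map, List.length_range]
  refine congrArg _ (Finset.prod_congr rfl fun j hj => ?_)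
  simp only [Finset.mem_range] at hj
  rw [getD_map_range (by omega), getD_map_range (by omega)]

lemma subword_eq (u : List Bool) (i : ℕ) (hi : 1 ≤ i) (hin : i ≤ u.length) :
    subword u i = (List.range (Nat.log 2 (u.length / i) + 1)).map
      (fun r => u.getD (2 ^ r * i - 1) false) := by
  rw [subword]
  congr 1
  refine filter_range_eq_range _ ?_ ?_
  · have h1 : Nat.log 2 (u.length / i) ≤ u.length / i := Nat.log_le_self _ _
    have := Nat.div_le_self u.length i
    omega
  · intro r
    have hd : 1 ≤ u.length / i := (Nat.one_le_div_iff (by omega)).2 hin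
    rw [← Nat.le_div_iff_mul_le (by omega)]
    rw [← Nat.le_log_iff_pow_le one_lt_two (by omega)]
    omega

lemma mweight_subword (p q : ℝ) (u : List Bool) (i : ℕ) (hi : 1 ≤ i) (hin : i ≤ u.length) :
    mweight p q (subword u i) =
      initProb p (u.getD (i - 1) false) *
        ∏ j ∈ Finset.range (Nat.log 2 (u.length / i)),
          transProb p q (u.getD (2 ^ j * i - 1) false) (u.getD (2 ^ (j + 1) * i - 1) false) := by
  rw [subword_eq u i hi hin, mweight_map_range p q _ _ (by omega)]
  simp

lemma pw_iff {i n j : ℕ} (hi : 1 ≤ i) (hin : i ≤ n) :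
    2 ^ j * i ≤ n ↔ j ≤ Nat.log 2 (n / i) := by
  have hd : 1 ≤ n / i := (Nat.one_le_div_iff (by omega)).2 hin
  rw [← Nat.le_div_iff_mul_le (by omega), ← Nat.le_log_iff_pow_le one_lt_two (by omega)]

lemma prod_odd_pow (n : ℕ) (G : ℕ → ℝ) :
    ∏ i ∈ (Finset.Icc 1 n).filter (fun i => Odd i),
      ∏ j ∈ Finset.range (Nat.log 2 (n / i)), G (2 ^ j * i) =
    ∏ k ∈ Finset.Icc 1 (n / 2), G k := by
  rw [Finset.prod_sigma']
  refine Finset.prod_bij' (fun x _ => 2 ^ x.2 * x.1)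
    (fun k _ => ⟨ordCompl[2] k, k.factorization 2⟩) ?_ ?_ ?_ ?_ ?_
  · rintro ⟨i, j⟩ hx
    simp only [Finset.mem_sigma, Finset.mem_filter, Finset.mem_Icc, Finset.mem_range] at hx ⊢
    obtain ⟨⟨⟨hi1, hin⟩, hodd⟩, hj⟩ := hx
    constructor
    · exact Nat.one_le_iff_ne_zero.2 (by positivity)
    · rw [Nat.le_div_iff_mul_le (by omega)]
      have : 2 ^ (j + 1) * i ≤ n := (pw_iff hi1 hin).2 (by omega)
      calc 2 ^ j * i * 2 = 2 ^ (j+1) * i := by ring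
        _ ≤ n := this
  · intro k hk
    simp only [Finset.mem_Icc] at hk
    obtain ⟨hk1, hk2⟩ := hk
    have hk0 : k ≠ 0 := by omega
    have h2k : 2 * k ≤ n := by
      have := (Nat.le_div_iff_mul_le (by omega : 0 < 2)).1 hk2; omega
    have hic : ordCompl[2] k ≤ k := Nat.ordCompl_le k 2
    have hic1 : 1 ≤ ordCompl[2] k := Nat.ordCompl_pos 2 hk0
    have hnd : ¬ (2 ∣ ordCompl[2] k) := Nat.not_dvd_ordCompl Nat.prime_two hk0
    simp only [Finset.mem_sigma, Finset.mem_filter, Finset.mem_Icc, Finset.mem_range]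
    refine ⟨⟨⟨hic1, le_trans hic (by omega)⟩, ?_⟩, ?_⟩
    · rw [Nat.odd_iff]; omega
    · have hkey : 2 ^ (k.factorization 2 + 1) * ordCompl[2] k ≤ n := by
        have := Nat.ordProj_mul_ordCompl_eq_self k 2
        calc 2 ^ (k.factorization 2 + 1) * ordCompl[2] k
            = 2 * (2 ^ (k.factorization 2) * ordCompl[2] k) := by ring
          _ = 2 * k := by rw [this]
          _ ≤ n := h2k
      have := (pw_iff hic1 (le_trans hic (by omega))).1 hkey
      omega
  · rintro ⟨i, j⟩ hx
    simp only [Finset.mem_sigma, Finset.mem_filter, Finset.mem_Icc, Finset.mem_range] at hx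
    obtain ⟨⟨⟨hi1, hin⟩, hodd⟩, hj⟩ := hx
    have hi0 : i ≠ 0 := by omega
    have hnd : ¬ (2 ∣ i) := by rw [Nat.odd_iff] at hodd; omega
    have hfac : (2 ^ j * i).factorization 2 = j := by
      rw [Nat.factorization_mul (by positivity) hi0]
      simp [Nat.Prime.factorization_pow Nat.prime_two,
        Nat.factorization_eq_zero_of_not_dvd hnd]
    simp only [hfac, Nat.mul_div_cancel_left _ (pow_pos two_pos j)]
  · intro k hk
    simp only
    exact Nat.ordProj_mul_ordCompl_eq_self k 2
  · intro x hx; rfl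


lemma PmuWord_eq (p q : ℝ) (u : List Bool) :
    PmuWord p q u =
      (∏ i ∈ (Finset.Icc 1 u.length).filter (fun i => Odd i),
        initProb p (u.getD (i - 1) false)) *
      ∏ k ∈ Finset.Icc 1 (u.length / 2),
        transProb p q (u.getD (k - 1) false) (u.getD (2 * k - 1) false) := by
  rw [PmuWord]
  rw [Finset.prod_congr rfl (fun i hi => by
    simp only [Finset.mem_filter, Finset.mem_Icc] at hi
    exact mweight_subword p q u i hi.1.1 hi.1.2)]
  rw [Finset.prod_mul_distrib]
  congr 1
  rw [← prod_odd_pow u.length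
    (fun k => transProb p q (u.getD (k - 1) false) (u.getD (2 * k - 1) false))]
  refine Finset.prod_congr rfl fun i hi => Finset.prod_congr rfl fun j hj => ?_
  have : 2 ^ (j + 1) * i = 2 * (2 ^ j * i) := by ring
  rw [this]


lemma sum_ite_card (F : Finset ℕ) (c : ℕ → Prop) [DecidablePred c] (A B : ℝ) :
    ∑ i ∈ F, (if c i then B else A) =
      A * F.card + (B - A) * ((F.filter c).card : ℝ) := by
  have h := Finset.card_filter_add_card_filter_not (s := F) (p := c)
  rw [Finset.sum_ite, Finset.sum_const, Finset.sum_const, nsmul_eq_mul, nsmul_eq_mul, ← h]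
  push_cast
  ring

lemma card_odd_Icc (n : ℕ) :
    (((Finset.Icc 1 n).filter (fun i => Odd i)).card : ℕ) = n - n / 2 := by
  induction n with
  | zero => simp
  | succ n ih =>
    have : Finset.Icc 1 (n + 1) = insert (n + 1) (Finset.Icc 1 n) := by
      rw [Finset.insert_Icc_right_eq_Icc_add_one (by omega)]
    rw [this, Finset.filter_insert]
    by_cases h : Odd (n + 1)
    · rw [if_pos h, Finset.card_insert_of_notMem (by simp), ih]
      rw [Nat.odd_iff] at h
      omega
    · rw [if_neg h, ih]
      rw [Nat.odd_iff] at h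
      omega

lemma even_part_card (x : ℕ → Bool) (n : ℕ) :
    ((((Finset.Icc 1 n).filter (fun k => x (k - 1) = true)).filter
      (fun i => ¬ Odd i)).card : ℕ) =
    ((Finset.Icc 1 (n / 2)).filter (fun k => x (2 * k - 1) = true)).card := by
  refine Finset.card_nbij' (fun i => i / 2) (fun k => 2 * k) ?_ ?_ ?_ ?_
  · intro a ha
    simp only [Finset.mem_coe, Finset.mem_filter, Finset.mem_Icc, Nat.odd_iff] at ha ⊢
    obtain ⟨⟨⟨h1, h2⟩, hx⟩, hodd⟩ := ha
    have he : a % 2 = 0 := by omega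
    refine ⟨⟨by omega, by omega⟩, ?_⟩
    have : 2 * (a / 2) = a := by omega
    rw [this]
    exact hx
  · intro k hk
    simp only [Finset.mem_coe, Finset.mem_filter, Finset.mem_Icc, Nat.odd_iff] at hk ⊢
    obtain ⟨⟨h1, h2⟩, hx⟩ := hk
    have : 2 * k ≤ n := by omega
    exact ⟨⟨⟨by omega, this⟩, hx⟩, by omega⟩
  · intro a ha
    simp only [Finset.mem_coe, Finset.mem_filter, Finset.mem_Icc, Nat.odd_iff] at ha
    simp only
    omega
  · intro k hk
    simp only
    omega

lemma N1_split (x : ℕ → Bool) (n : ℕ) :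
    N1 x 1 n = N1odd x n +
      ((Finset.Icc 1 (n / 2)).filter (fun k => x (2 * k - 1) = true)).card := by
  rw [N1, ← Finset.card_filter_add_card_filter_not (p := fun i => Odd i)]
  rw [even_part_card, Finset.filter_filter, N1odd]
  congr 1
  congr 1
  ext i
  simp only [Finset.mem_filter, Finset.mem_Icc]
  tauto

lemma word_length (x : ℕ → Bool) (n : ℕ) : (word x n).length = n := by
  simp [word]

lemma word_getD (x : ℕ → Bool) {n j : ℕ} (h : j < n) : (word x n).getD j false = x j :=
  getD_map_range h

section Main
variable {p q : ℝ} (hp : p ∈ Set.Ioo (0:ℝ) 1) (hq : q ∈ Set.Ioo (0:ℝ) 1)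

include hp in
lemma initProb_mem (b : Bool) : initProb p b ∈ Set.Ioc (0:ℝ) 1 := by
  obtain ⟨h1, h2⟩ := hp
  cases b <;> simp [initProb] <;> constructor <;> linarith

include hp hq in
lemma transProb_mem (a b : Bool) : transProb p q a b ∈ Set.Ioc (0:ℝ) 1 := by
  obtain ⟨h1, h2⟩ := hp; obtain ⟨h3, h4⟩ := hq
  cases a <;> cases b <;> simp [transProb] <;> constructor <;> linarith

lemma PmuWord_word (x : ℕ → Bool) (n : ℕ) :
    PmuWord p q (word x n) =
      (∏ i ∈ (Finset.Icc 1 n).filter (fun i => Odd i), initProb p (x (i - 1))) *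
      ∏ k ∈ Finset.Icc 1 (n / 2), transProb p q (x (k - 1)) (x (2 * k - 1)) := by
  rw [PmuWord_eq, word_length]
  congr 1
  · refine Finset.prod_congr rfl fun i hi => ?_
    simp only [Finset.mem_filter, Finset.mem_Icc] at hi
    rw [word_getD x (by omega)]
  · refine Finset.prod_congr rfl fun k hk => ?_
    simp only [Finset.mem_Icc] at hk
    have h2k : 2 * k ≤ n := by
      have := (Nat.le_div_iff_mul_le (by omega : 0 < 2)).1 hk.2; omega
    rw [word_getD x (by omega), word_getD x (by omega)]

include hp hq in
lemma PmuWord_word_mem (x : ℕ → Bool) (n : ℕ) :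
    PmuWord p q (word x n) ∈ Set.Ioc (0:ℝ) 1 := by
  rw [PmuWord_word]
  constructor
  · apply mul_pos <;> exact Finset.prod_pos fun i _ => by
      first
        | exact (initProb_mem hp _).1
        | exact (transProb_mem hp hq _ _).1
  · have h1 : ∏ i ∈ (Finset.Icc 1 n).filter (fun i => Odd i), initProb p (x (i - 1)) ≤ 1 :=
      Finset.prod_le_one (fun i _ => le_of_lt (initProb_mem hp _).1)
        (fun i _ => (initProb_mem hp _).2)
    have h2 : ∏ k ∈ Finset.Icc 1 (n / 2), transProb p q (x (k - 1)) (x (2 * k - 1)) ≤ 1 :=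
      Finset.prod_le_one (fun k _ => le_of_lt (transProb_mem hp hq _ _).1)
        (fun k _ => (transProb_mem hp hq _ _).2)
    have h3 : (0:ℝ) ≤ ∏ k ∈ Finset.Icc 1 (n / 2), transProb p q (x (k - 1)) (x (2 * k - 1)) :=
      le_of_lt (Finset.prod_pos fun k _ => (transProb_mem hp hq _ _).1)
    nlinarith

include hp hq in
lemma neg_logb_PmuWord (x : ℕ → Bool) (n : ℕ) :
    -Real.logb 2 (PmuWord p q (word x n)) =
      (∑ i ∈ (Finset.Icc 1 n).filter (fun i => Odd i),
        -Real.logb 2 (initProb p (x (i - 1)))) +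
      ∑ k ∈ Finset.Icc 1 (n / 2), -Real.logb 2 (transProb p q (x (k - 1)) (x (2 * k - 1))) := by
  rw [PmuWord_word, Real.logb_mul, Real.logb_prod, Real.logb_prod]
  · rw [neg_add, ← Finset.sum_neg_distrib, ← Finset.sum_neg_distrib]
  · exact fun k _ => ne_of_gt (transProb_mem hp hq _ _).1
  · exact fun i _ => ne_of_gt (initProb_mem hp _).1
  · exact ne_of_gt (Finset.prod_pos fun i _ => (initProb_mem hp _).1)
  · exact ne_of_gt (Finset.prod_pos fun k _ => (transProb_mem hp hq _ _).1)

lemma N1odd_eq_filter (x : ℕ → Bool) (n : ℕ) :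
    ((((Finset.Icc 1 n).filter (fun i => Odd i)).filter (fun i => x (i - 1) = true)).card : ℕ)
      = N1odd x n := by
  rw [Finset.filter_filter, N1odd]

include hp hq in
lemma grand_identity (x : ℕ → Bool) (n : ℕ) :
    -Real.logb 2 (PmuWord p q (word x n)) =
      (-Real.logb 2 (1 - p)) * n
      + ((-Real.logb 2 p) - (-Real.logb 2 (1 - p))) * (N1 x 1 n : ℝ)
      + ((-Real.logb 2 q) - (-Real.logb 2 (1 - p))) * (N1 x 1 (n / 2) : ℝ)
      + ((-Real.logb 2 (1 - p)) + (-Real.logb 2 (1 - q)) - (-Real.logb 2 p) - (-Real.logb 2 q))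
          * (Nij x true true (n / 2) : ℝ) := by
  rw [neg_logb_PmuWord hp hq]
  have hπ : ∀ i : ℕ, -Real.logb 2 (initProb p (x (i - 1)))
      = if x (i - 1) = true then -Real.logb 2 p else -Real.logb 2 (1 - p) := fun i => by
    cases h : x (i - 1) <;> simp [initProb, h]
  have hψ : ∀ k : ℕ, -Real.logb 2 (transProb p q (x (k - 1)) (x (2 * k - 1))) =
      (-Real.logb 2 (1 - p))
      + ((-Real.logb 2 p) - (-Real.logb 2 (1 - p)))
          * (if x (2 * k - 1) = true then (1:ℝ) else 0)
      + ((-Real.logb 2 q) - (-Real.logb 2 (1 - p)))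
          * (if x (k - 1) = true then (1:ℝ) else 0)
      + ((-Real.logb 2 (1 - p)) + (-Real.logb 2 (1 - q)) - (-Real.logb 2 p) - (-Real.logb 2 q))
          * (if (x (k - 1) = true ∧ x (2 * k - 1) = true) then (1:ℝ) else 0) := fun k => by
    cases h1 : x (k - 1) <;> cases h2 : x (2 * k - 1) <;> simp [transProb, h1, h2] <;> ring
  rw [Finset.sum_congr rfl (fun i _ => hπ i), sum_ite_card,
    Finset.sum_congr rfl (fun k _ => hψ k)]
  rw [Finset.sum_add_distrib, Finset.sum_add_distrib, Finset.sum_add_distrib, Finset.sum_const,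
    ← Finset.mul_sum, ← Finset.mul_sum, ← Finset.mul_sum,
    Finset.sum_boole, Finset.sum_boole, Finset.sum_boole]
  have hle : n / 2 ≤ n := Nat.div_le_self _ _
  have hm : (Finset.Icc 1 (n / 2)).card = n / 2 := by simp
  have hMeq : (Finset.filter (fun k => x (k - 1) = true ∧ x (2 * k - 1) = true)
      (Finset.Icc 1 (n / 2))).card = Nij x true true (n / 2) := by
    rw [Nij]
  have hF1 : (Finset.filter (fun k => x (k - 1) = true) (Finset.Icc 1 (n / 2))).card
      = N1 x 1 (n / 2) := by rw [N1]
  rw [N1odd_eq_filter, card_odd_Icc, hm, hMeq, hF1, N1_split x n]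
  push_cast [Nat.cast_sub hle]
  ring

end Main


lemma sum_xval_eq (x : ℕ → Bool) (m : ℕ) :
    ∑ k ∈ Finset.Icc 1 m, xval x k * xval x (2 * k) = (Nij x true true m : ℝ) := by
  rw [Nij]
  rw [← Finset.sum_boole]
  refine Finset.sum_congr rfl fun k _ => ?_
  cases h1 : x (k - 1) <;> cases h2 : x (2 * k - 1) <;> simp [xval, h1, h2]

section Main2
variable {p q : ℝ} (hp : p ∈ Set.Ioo (0:ℝ) 1) (hq : q ∈ Set.Ioo (0:ℝ) 1)

include hp hq in
lemma logb_relation (hpq : p ^ 2 * q = (1 - p) ^ 3) :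
    (-Real.logb 2 q) - (-Real.logb 2 (1 - p)) =
      -2 * ((-Real.logb 2 p) - (-Real.logb 2 (1 - p))) := by
  obtain ⟨h1, h2⟩ := hp; obtain ⟨h3, h4⟩ := hq
  have key : Real.logb 2 (p ^ 2 * q) = Real.logb 2 ((1 - p) ^ 3) := by rw [hpq]
  rw [Real.logb_mul (by positivity) (by positivity), Real.logb_pow, Real.logb_pow] at key
  push_cast at key
  linarith

include hp hq in
lemma rhs_eq (θ : ℝ) :
    -Real.logb 2 (1 - p) - θ / 2 * Real.logb 2 ((1 - q) * (1 - p) / (q * p)) =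
      (-Real.logb 2 (1 - p)) + θ / 2 *
        ((-Real.logb 2 (1 - p)) + (-Real.logb 2 (1 - q))
          - (-Real.logb 2 p) - (-Real.logb 2 q)) := by
  obtain ⟨h1, h2⟩ := hp; obtain ⟨h3, h4⟩ := hq
  have e1 : (1:ℝ) - q ≠ 0 := by linarith
  have e2 : (1:ℝ) - p ≠ 0 := by linarith
  have e3 : q ≠ 0 := by linarith
  have e4 : p ≠ 0 := by linarith
  rw [Real.logb_div (mul_ne_zero e1 e2) (mul_ne_zero e3 e4),
    Real.logb_mul e1 e2, Real.logb_mul e3 e4]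
  ring

end Main2


/-- Lemma 2.3: if `p, q ∈ (0,1)` satisfy `p²q = (1-p)³` and `θ = 2p(1-q)/(1+p+q)`, then for
every `x ∈ A_θ`, `liminf_{n→∞} (-log₂ ℙ_μ[x_1^n])/n ≤ f(θ)`. -/
theorem liminf_le_f (p q θ : ℝ) (hp : p ∈ Set.Ioo (0 : ℝ) 1) (hq : q ∈ Set.Ioo (0 : ℝ) 1)
    (hpq : p ^ 2 * q = (1 - p) ^ 3) (hth : θ = 2 * p * (1 - q) / (1 + p + q))
    (Pm : Measure Sigma2) (hPm : IsPmu p q Pm) (x : Sigma2) (hx : x ∈ Aset θ) :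
    Filter.liminf
        (fun n : ℕ => -Real.logb 2 ((Pm (cylinder (word x n))).toReal) / (n : ℝ)) atTop ≤
      -Real.logb 2 (1 - p) - θ / 2 * Real.logb 2 ((1 - q) * (1 - p) / (q * p)) := by
  classical
  obtain ⟨hprob, hcyl⟩ := hPm
  set A : ℝ := -Real.logb 2 (1 - p) with hAdef
  set B : ℝ := -Real.logb 2 p with hBdef
  set C : ℝ := -Real.logb 2 q with hCdef
  set D : ℝ := -Real.logb 2 (1 - q) with hDdef
  set β : ℝ := A + D - B - C with hβdef
  have hmem : ∀ n : ℕ, PmuWord p q (word x n) ∈ Set.Ioc (0:ℝ) 1 :=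
    fun n => PmuWord_word_mem hp hq x n
  have hPW : ∀ n : ℕ, (Pm (cylinder (word x n))).toReal = PmuWord p q (word x n) := fun n => by
    rw [hcyl, ENNReal.toReal_ofReal (le_of_lt (hmem n).1)]
  simp only [hPW]
  set h : ℕ → ℝ := fun n => -Real.logb 2 (PmuWord p q (word x n)) / (n : ℝ) with hhdef
  have hh0 : ∀ n, 0 ≤ h n := fun n => by
    apply div_nonneg _ (Nat.cast_nonneg n)
    have := Real.logb_nonpos one_lt_two (le_of_lt (hmem n).1) (hmem n).2
    linarith
  -- counting bounds
  have hN1le : ∀ m : ℕ, (N1 x 1 m : ℝ) ≤ m := fun m => by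
    have : N1 x 1 m ≤ m := le_trans (Finset.card_filter_le _ _) (by simp)
    exact_mod_cast this
  have hNijle : ∀ m : ℕ, (Nij x true true m : ℝ) ≤ m := fun m => by
    have : Nij x true true m ≤ m := le_trans (Finset.card_filter_le _ _) (by simp)
    exact_mod_cast this
  -- uniform upper bound on h
  set K : ℝ := |A| + |B - A| + |C - A| + |β| with hKdef
  have hKn : ∀ n, h n ≤ K := fun n => by
    rcases Nat.eq_zero_or_pos n with h0 | h0
    · subst h0
      simp only [hhdef, Nat.cast_zero, div_zero, hKdef]
      positivity
    · have hnpos : (0:ℝ) < n := by exact_mod_cast h0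
      rw [hhdef]
      simp only
      rw [grand_identity hp hq x n, div_le_iff₀ hnpos]
      simp only [← hAdef, ← hBdef, ← hCdef, ← hDdef]
      have hhalf : ((n / 2 : ℕ) : ℝ) ≤ (n : ℝ) := by
        have := Nat.div_le_self n 2; exact_mod_cast this
      have c1 : A * n ≤ |A| * n :=
        mul_le_mul_of_nonneg_right (le_abs_self _) (le_of_lt hnpos)
      have c2 : (B - A) * (N1 x 1 n : ℝ) ≤ |B - A| * n := by
        calc (B - A) * (N1 x 1 n : ℝ) ≤ |B - A| * (N1 x 1 n : ℝ) :=
              mul_le_mul_of_nonneg_right (le_abs_self _) (Nat.cast_nonneg _)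
          _ ≤ |B - A| * n := mul_le_mul_of_nonneg_left (hN1le n) (abs_nonneg _)
      have c3 : (C - A) * (N1 x 1 (n / 2) : ℝ) ≤ |C - A| * n := by
        calc (C - A) * (N1 x 1 (n / 2) : ℝ) ≤ |C - A| * (N1 x 1 (n / 2) : ℝ) :=
              mul_le_mul_of_nonneg_right (le_abs_self _) (Nat.cast_nonneg _)
          _ ≤ |C - A| * n := mul_le_mul_of_nonneg_left
              (le_trans (hN1le _) hhalf) (abs_nonneg _)
      have c4 : β * (Nij x true true (n / 2) : ℝ) ≤ |β| * n := by
        calc β * (Nij x true true (n / 2) : ℝ) ≤ |β| * (Nij x true true (n / 2) : ℝ) :=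
              mul_le_mul_of_nonneg_right (le_abs_self _) (Nat.cast_nonneg _)
          _ ≤ |β| * n := mul_le_mul_of_nonneg_left
              (le_trans (hNijle _) hhalf) (abs_nonneg _)
      rw [hKdef]
      rw [hβdef] at c4 ⊢
      rw [add_mul, add_mul, add_mul]
      clear_value K β D C B A
      clear * - c1 c2 c3 c4
      linarith
  -- the subsequence n = 2^(k+1)
  set s : ℕ → ℕ := fun k => 2 ^ (k + 1) with hsdef
  have h2pow : Tendsto (fun k : ℕ => 2 ^ k) atTop atTop :=
    tendsto_pow_atTop_atTop_of_one_lt one_lt_two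
  have hsT : Tendsto s atTop atTop := by
    refine h2pow.comp (tendsto_add_atTop_nat 1)
  have hbdd : IsBoundedUnder (· ≥ ·) atTop h := isBoundedUnder_of ⟨0, fun n => hh0 n⟩
  have hbddK : IsBoundedUnder (· ≤ ·) (Filter.map s atTop) h :=
    isBoundedUnder_of ⟨K, fun n => hKn _⟩
  have hcob : Filter.IsCoboundedUnder (· ≥ ·) (Filter.map s atTop) h :=
    hbddK.isCoboundedUnder_ge
  have step1 : Filter.liminf h atTop ≤ Filter.liminf (h ∘ s) atTop := by
    have := Filter.liminf_le_liminf_of_le (hsT : Filter.map s atTop ≤ atTop) hbdd hcob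
    rwa [← Filter.liminf_comp] at this
  -- the relation between C - A and B - A
  have hrel : C - A = -2 * (B - A) := logb_relation hp hq hpq
  -- v and w
  set v : ℕ → ℝ := fun k => (N1 x 1 (2 ^ k) : ℝ) / 2 ^ k with hvdef
  set w : ℕ → ℝ := fun k => (Nij x true true (2 ^ k) : ℝ) / 2 ^ k with hwdef
  have hvmem : ∀ k, 0 ≤ v k ∧ v k ≤ 1 := fun k => by
    constructor
    · apply div_nonneg (Nat.cast_nonneg _); positivity
    · rw [hvdef]
      simp only
      rw [div_le_one (by positivity)]
      calc (N1 x 1 (2 ^ k) : ℝ) ≤ ((2 ^ k : ℕ) : ℝ) := hN1le _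
        _ = (2:ℝ) ^ k := by push_cast; ring
  have hsk : ∀ k, h (s k) = A + (B - A) * (v (k + 1) - v k) + β * (w k / 2) := fun k => by
    have hdiv : (2 ^ (k + 1)) / 2 = 2 ^ k := by
      rw [pow_succ, Nat.mul_div_cancel _ (by norm_num)]
    rw [hhdef]
    simp only [hsdef]
    rw [grand_identity hp hq x (2 ^ (k + 1)), hdiv, hrel]
    rw [hvdef, hwdef]
    simp only
    have e1 : ((2 ^ (k + 1) : ℕ) : ℝ) = 2 ^ (k + 1) := by push_cast; ring
    rw [e1]
    have e2 : (2:ℝ) ^ (k + 1) ≠ 0 := by positivity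
    have e3 : (2:ℝ) ^ k ≠ 0 := by positivity
    field_simp
    ring
  -- tendsto of w
  have hxT : Tendsto (fun m : ℕ => (Nij x true true m : ℝ) / m) atTop (nhds θ) := by
    have hx' := hx
    simp only [Aset, Set.mem_setOf_eq] at hx'
    refine Filter.Tendsto.congr (fun m => ?_) hx'
    rw [sum_xval_eq]
  have hwT : Tendsto w atTop (nhds θ) := by
    have := hxT.comp h2pow
    refine this.congr fun k => ?_
    simp only [Function.comp, hwdef]
    push_cast
    ring
  -- rewrite the goal constant
  rw [rhs_eq hp hq θ]
  rw [← hAdef, ← hBdef, ← hCdef, ← hDdef, ← hβdef]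
  refine le_trans step1 ?_
  -- final: liminf (h ∘ s) ≤ A + θ/2 * β
  by_contra hlt
  push_neg at hlt
  set Lf := Filter.liminf (h ∘ s) atTop with hLf
  set ε : ℝ := (Lf - (A + θ / 2 * β)) / 2 with hεdef
  have hεpos : 0 < ε := by rw [hεdef]; linarith
  have hev1 : ∀ᶠ k in atTop, A + θ / 2 * β + ε < (h ∘ s) k := by
    apply Filter.eventually_lt_of_lt_liminf
    · rw [← hLf]; rw [hεdef]; linarith
    · exact isBoundedUnder_of ⟨0, fun k => hh0 (s k)⟩
  have hβwT : Tendsto (fun k => β * (w k / 2)) atTop (nhds (β * (θ / 2))) :=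
    (hwT.div_const 2).const_mul β
  have hev2 : ∀ᶠ k in atTop, |β * (w k / 2) - β * (θ / 2)| < ε / 2 := by
    have := Metric.tendsto_atTop.1 hβwT (ε / 2) (by positivity)
    obtain ⟨N, hN⟩ := this
    filter_upwards [eventually_ge_atTop N] with k hk
    have := hN k hk
    rwa [Real.dist_eq] at this
  obtain ⟨K0, hK0⟩ := (hev1.and hev2).exists_forall_of_atTop
  have hstep : ∀ k, K0 ≤ k → ε / 2 < (B - A) * (v (k + 1) - v k) := fun k hk => by
    obtain ⟨ha1, ha2⟩ := hK0 k hk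
    have hsk' := hsk k
    have habs := abs_lt.1 ha2
    simp only [Function.comp] at ha1
    rw [hsk'] at ha1
    linarith [habs.1, habs.2]
  have hkey : ∀ j : ℕ, (B - A) * v K0 + j * (ε / 2) ≤ (B - A) * v (K0 + j) := by
    intro j
    induction j with
    | zero => simp
    | succ j ih =>
      have := hstep (K0 + j) (by omega)
      have expand : (B - A) * (v (K0 + j + 1) - v (K0 + j))
          = (B - A) * v (K0 + j + 1) - (B - A) * v (K0 + j) := by ring
      rw [expand] at this
      have : (B - A) * v (K0 + j) + ε / 2 < (B - A) * v (K0 + (j + 1)) := by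
        have e : K0 + (j + 1) = K0 + j + 1 := by omega
        rw [e]; linarith
      push_cast
      push_cast at ih
      linarith
  -- contradiction with boundedness
  obtain ⟨j, hj⟩ := exists_nat_gt ((2 * |B - A| + 1) / (ε / 2))
  have hb1 : (B - A) * v (K0 + j) ≤ |B - A| := by
    calc (B - A) * v (K0 + j) ≤ |B - A| * v (K0 + j) :=
          mul_le_mul_of_nonneg_right (le_abs_self _) (hvmem _).1
      _ ≤ |B - A| * 1 := mul_le_mul_of_nonneg_left (hvmem _).2 (abs_nonneg _)
      _ = |B - A| := mul_one _
  have hb2 : -|B - A| ≤ (B - A) * v K0 := by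
    calc -|B - A| = -|B - A| * 1 := by ring
      _ ≤ -|B - A| * v K0 := by
          apply mul_le_mul_of_nonpos_left (hvmem _).2 (neg_nonpos.2 (abs_nonneg _))
      _ ≤ (B - A) * v K0 :=
          mul_le_mul_of_nonneg_right (neg_abs_le _) (hvmem _).1
  have hjb : (j : ℝ) * (ε / 2) ≤ 2 * |B - A| := by
    have h1 := hkey j
    clear_value ε Lf w v s h K β D C B A
    clear * - h1 hb1 hb2
    linarith
  have : (2 * |B - A| + 1) ≤ (j : ℝ) * (ε / 2) := by
    rw [div_lt_iff₀ (by positivity)] at hj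
    linarith
  linarith
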